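/- Let G be a profinite group such that every closed subgroup of G has a closed permutable complement, and let S be a closed subgroup with G = HS for some closed subgroup H. Then S contains a closed permutable complement of H in G. -/

import Mathlib

open Pointwise

/-- In a profinite group in which every closed subgroup has a closed permutable
complement, every closed supplement `S` of a closed subgroup `H` contains a closed
permutable complement of `H`. -/
theorem stmt3 {G : Type*} [Group G] [TopologicalSpace G] [IsTopologicalGroup G]
    [CompactSpace G] [T2Space G] [TotallyDisconnectedSpace G]
    (hC : ∀ H : Subgroup G, IsClosed (H : Set G) → ∃ K : Subgroup G,
      IsClosed (K : Set G) ∧ (H : Set G) * (K : Set G) = Set.univ ∧ H ⊓ K = ⊥)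
    (H S : Subgroup G) (hHc : IsClosed (H : Set G)) (hSc : IsClosed (S : Set G))
    (hsup : (H : Set G) * (S : Set G) = Set.univ) :
    ∃ K : Subgroup G, K ≤ S ∧ IsClosed (K : Set G) ∧
      (H : Set G) * (K : Set G) = Set.univ ∧ H ⊓ K = ⊥ := by
  obtain ⟨L, hLc, hLsup, hLinf⟩ := hC (H ⊓ S) (by rw [Subgroup.coe_inf]; exact hHc.inter hSc)
  refine ⟨S ⊓ L, inf_le_left, ?_, ?_, ?_⟩
  · rw [Subgroup.coe_inf]; exact hSc.inter hLc
  · apply Set.eq_univ_of_forall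
    intro g
    have hg : g ∈ (H : Set G) * (S : Set G) := hsup ▸ Set.mem_univ g
    obtain ⟨h, hh, s, hs, rfl⟩ := hg
    have hsmem : s ∈ ((H ⊓ S : Subgroup G) : Set G) * (L : Set G) := hLsup ▸ Set.mem_univ s
    obtain ⟨a, ha, l, hl, rfl⟩ := hsmem
    have haS : a ∈ S := ha.2
    have haH : a ∈ H := ha.1
    have hlS : l ∈ S := by
      have := mul_mem (inv_mem haS) hs
      rwa [inv_mul_cancel_left] at this
    exact ⟨h * a, mul_mem hh haH, l, ⟨hlS, hl⟩, by group⟩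
  · rw [← inf_assoc]; exact hLinf
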